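/- Let α ≠ 0, β ≠ 0, Ω ≠ 0, w₁ < 0 and μ₂ ∈ ℝ, and let A be the real 2×2 matrix with first row (0, α·w₁) and second row (Ω/α, αβΩ⁻¹w₁μ₂). Then det A = −Ω·w₁ and tr A = αβΩ⁻¹w₁μ₂. If Ω < 0, then A has two real eigenvalues λ₋ < 0 < λ₊ (a saddle), and λ₊ = −λ₋ (a neutral saddle) if and only if μ₂ = 0. -/

import Mathlib

/-- The Ω < 0 part of Lemma 7.1: the linearization
`A = !![0, αw₁; Ω/α, αβΩ⁻¹w₁μ₂]` has `det A = −Ωw₁`, `tr A = αβΩ⁻¹w₁μ₂`, and for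
`Ω < 0` it is a saddle: two real eigenvalues `λ₋ < 0 < λ₊`, neutral (`λ₊ = −λ₋`)
iff `μ₂ = 0`. -/
theorem regularized_pseudo_equilibrium_saddle
    (α β Ω w₁ μ₂ : ℝ) (hα : α ≠ 0) (hβ : β ≠ 0) (hΩ : Ω ≠ 0) (hw : w₁ < 0)
    (A : Matrix (Fin 2) (Fin 2) ℝ)
    (hA : A = !![0, α * w₁; Ω / α, α * β * Ω⁻¹ * w₁ * μ₂]) :
    A.det = -(Ω * w₁) ∧
    A.trace = α * β * Ω⁻¹ * w₁ * μ₂ ∧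
    (Ω < 0 → ∃ lm lp : ℝ, lm < 0 ∧ 0 < lp ∧
      Module.End.HasEigenvalue (Matrix.toLin' A) lm ∧
      Module.End.HasEigenvalue (Matrix.toLin' A) lp ∧
      (∀ l : ℝ, Module.End.HasEigenvalue (Matrix.toLin' A) l → l = lm ∨ l = lp) ∧
      (lp = -lm ↔ μ₂ = 0)) := by
  subst hA
  refine ⟨by simp [Matrix.det_fin_two_of]; field_simp, by simp [Matrix.trace_fin_two_of], ?_⟩
  intro hΩneg
  set t : ℝ := α * β * Ω⁻¹ * w₁ * μ₂ with ht
  have hΩw : 0 < Ω * w₁ := mul_pos_of_neg_of_neg hΩneg hw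
  have hΔpos : 0 < t ^ 2 + 4 * (Ω * w₁) := by positivity
  set s : ℝ := Real.sqrt (t ^ 2 + 4 * (Ω * w₁)) with hs
  have hs2 : s ^ 2 = t ^ 2 + 4 * (Ω * w₁) := Real.sq_sqrt hΔpos.le
  have hslt : |t| < s := by
    calc |t| = Real.sqrt (t ^ 2) := (Real.sqrt_sq_eq_abs t).symm
    _ < s := Real.sqrt_lt_sqrt (sq_nonneg t) (by linarith)
  obtain ⟨h1, h2⟩ := abs_lt.mp hslt
  have hbw : α * w₁ ≠ 0 := mul_ne_zero hα hw.ne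
  have eig : ∀ l : ℝ, l ^ 2 = t * l + Ω * w₁ →
      Module.End.HasEigenvalue (Matrix.toLin' (!![0, α * w₁; Ω / α, t])) l := by
    intro l hl
    apply Module.End.hasEigenvalue_of_hasEigenvector (x := ![α * w₁, l])
    refine ⟨Module.End.mem_eigenspace_iff.mpr ?_, ?_⟩
    · rw [Matrix.toLin'_apply]
      funext i
      fin_cases i
      · simp [Matrix.mulVec, dotProduct, Fin.sum_univ_two]; ring
      · simp [Matrix.mulVec, dotProduct, Fin.sum_univ_two]
        have hca : Ω / α * (α * w₁) = Ω * w₁ := by field_simp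
        linear_combination hca - hl
    · intro h0'
      have := congrFun h0' 0
      simp at this
      rcases this with h | h
      · exact hα h
      · exact hw.ne h
  refine ⟨(t - s) / 2, (t + s) / 2, by linarith, by linarith, ?_, ?_, ?_, ?_⟩
  case _ =>
    exact eig _ (by linear_combination hs2 / 4)
  case _ =>
    exact eig _ (by linear_combination hs2 / 4)
  case _ =>
    intro l hl
    obtain ⟨v, hv⟩ := hl.exists_hasEigenvector
    have heq := hv.apply_eq_smul
    rw [Matrix.toLin'_apply] at heq
    have h0 := congrFun heq 0
    have h1 := congrFun heq 1
    simp [Matrix.mulVec, dotProduct, Fin.sum_univ_two] at h0 h1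
    have hv0 : v 0 ≠ 0 := by
      intro hz
      apply hv.right
      have hv1 : v 1 = 0 := by
        rw [hz] at h0
        simpa [hbw] using h0
      funext i
      fin_cases i <;> simp [hz, hv1]
    field_simp at h1
    have hq : l ^ 2 = t * l + Ω * w₁ := by
      have h : l ^ 2 * v 0 = (t * l + Ω * w₁) * v 0 := by
        linear_combination (t - l) * h0 - w₁ * h1
      exact mul_right_cancel₀ hv0 h
    have hfac : (l - (t - s) / 2) * (l - (t + s) / 2) = 0 := by
      linear_combination hq - hs2 / 4
    rcases mul_eq_zero.mp hfac with h' | h'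
    · exact Or.inl (by linarith [sub_eq_zero.mp h'])
    · exact Or.inr (by linarith [sub_eq_zero.mp h'])
  case _ =>
    have hcoef : α * β * Ω⁻¹ * w₁ ≠ 0 :=
      mul_ne_zero (mul_ne_zero (mul_ne_zero hα hβ) (inv_ne_zero hΩ)) hw.ne
    constructor
    · intro h
      have hts : t = 0 := by linarith [h]
      rw [ht] at hts
      rcases mul_eq_zero.mp hts with h' | h'
      · exact absurd h' hcoef
      · exact h'
    · intro h
      have : t = 0 := by rw [ht, h, mul_zero]
      linarith
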